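/- Suppose g(B_1) = 0, suppose Dg(B_0) = id − R where R is a continuous linear endomorphism of E with R^{N+1} = 0 and ‖R‖ ≤ m_γ^z, suppose ‖D²g(x)‖ ≤ m_{∂γ} on the closed segment joining B_0 and B_1, and suppose ‖B_1 − B_0‖ ≤ η · m_L^θ · m_γ^θ. Let B̄ = B_0 − Dg(B_0)^{-1} g(B_0) be the result of one Newton step applied at B_0. Then ‖B_1 − B̄‖ ≤ (1/2) · η² · (m_L^θ m_γ^θ)² · m_{∂γ} · Σ_{n=0}^{N} (m_γ^z)^n; in particular, ‖B_1 − B̄‖ ≤ M η² for the constant M = (1/2)(m_L^θ m_γ^θ)² m_{∂γ} Σ_{n=0}^{N} (m_γ^z)^n (which equals (1/2)(m_L^θ m_γ^θ)² m_{∂γ} (1 − (m_γ^z)^{N+1})/(1 − m_γ^z) when m_γ^z ≠ 1). -/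

import Mathlib

/-- **Quadratic fixed-point tracking with nilpotent multiple-shooting Jacobian.**
Suppose `g B1 = 0`, `Dg B0 = id - R` with `R` nilpotent (`R^(N+1) = 0`) and
`‖R‖ ≤ mγz`, `‖D²g‖ ≤ m∂γ` on the segment joining `B0` and `B1`, and
`‖B1 - B0‖ ≤ η · mLθ · mγθ`. Then the result `B̄` of one Newton step at `B0`
(characterized by `Dg B0 (B0 - B̄) = g B0`) satisfies
`‖B1 - B̄‖ ≤ (1/2) η² (mLθ mγθ)² m∂γ Σ_{n=0}^{N} mγz^n`; moreover when
`mγz ≠ 1` the geometric sum equals `(1 - mγz^(N+1))/(1 - mγz)`. -/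
theorem newton_tracking_nilpotent
    {E : Type*} [NormedAddCommGroup E] [NormedSpace ℝ E] [CompleteSpace E]
    (N : ℕ) (g : E → E) (B0 B1 : E)
    (U : Set E) (hU : IsOpen U) (hseg : segment ℝ B0 B1 ⊆ U)
    (hg : ContDiffOn ℝ 2 g U)
    (hroot : g B1 = 0)
    (R : E →L[ℝ] E)
    (hDg : fderiv ℝ g B0 = 1 - R)
    (hnil : R ^ (N + 1) = 0)
    (η mLθ mγθ mγz mδγ : ℝ)
    (hη : 0 ≤ η) (hmLθ : 0 ≤ mLθ) (hmγθ : 0 ≤ mγθ) (hmγz : 0 ≤ mγz) (hmδγ : 0 ≤ mδγ)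
    (hR : ‖R‖ ≤ mγz)
    (hK : ∀ x ∈ segment ℝ B0 B1, ‖iteratedFDerivWithin ℝ 2 g U x‖ ≤ mδγ)
    (hdist : ‖B1 - B0‖ ≤ η * (mLθ * mγθ))
    (Bbar : E)
    (hNewton : fderiv ℝ g B0 (B0 - Bbar) = g B0) :
    ‖B1 - Bbar‖ ≤
      (1 / 2) * η ^ 2 * (mLθ * mγθ) ^ 2 * mδγ * ∑ n ∈ Finset.range (N + 1), mγz ^ n ∧
    (mγz ≠ 1 →
      ∑ n ∈ Finset.range (N + 1), mγz ^ n = (1 - mγz ^ (N + 1)) / (1 - mγz)) := by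
  have hUD : UniqueDiffOn ℝ U := hU.uniqueDiffOn
  set v := B1 - B0 with hv
  set s := segment ℝ B0 B1 with hs
  have hB0s : B0 ∈ s := left_mem_segment ℝ B0 B1
  have hB1s : B1 ∈ s := right_mem_segment ℝ B0 B1
  set F : E → E →L[ℝ] E := fun x => fderivWithin ℝ g U x with hF
  have hFc : ContDiffOn ℝ 1 F U := hg.fderivWithin hUD (by norm_num)
  have hFd : DifferentiableOn ℝ F U := hFc.differentiableOn one_ne_zero
  -- derivative of the derivative is bounded by mδγ on the segment
  have hbound : ∀ x ∈ s, ‖fderivWithin ℝ F U x‖ ≤ mδγ := by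
    intro x hx
    have hxU : x ∈ U := hseg hx
    have h1 : iteratedFDerivWithin ℝ 1 F U x =
        (continuousMultilinearCurryFin1 ℝ E (E →L[ℝ] E)).symm (fderivWithin ℝ F U x) := by
      ext m
      rw [iteratedFDerivWithin_one_apply (hUD x hxU)]
      rfl
    have h2 : ‖fderivWithin ℝ F U x‖ = ‖iteratedFDerivWithin ℝ 2 g U x‖ := by
      rw [← norm_iteratedFDerivWithin_fderivWithin (n := 1) hUD hxU, h1,
        LinearIsometryEquiv.norm_map]
    rw [h2]; exact hK x hx
  -- Lipschitz-type bound for fderiv on the segment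
  have hLip : ∀ x ∈ s, ‖fderiv ℝ g x - fderiv ℝ g B0‖ ≤ mδγ * ‖x - B0‖ := by
    intro x hx
    have h := (convex_segment B0 B1).norm_image_sub_le_of_norm_hasFDerivWithin_le
      (f := F) (f' := fun x => fderivWithin ℝ F U x)
      (fun y hy => ((hFd y (hseg hy)).hasFDerivWithinAt).mono hseg) hbound hB0s hx
    simpa only [hF, fderivWithin_of_isOpen hU (hseg hx),
      fderivWithin_of_isOpen hU (hseg hB0s)] using h
  -- quadratic Taylor bound
  have hTaylor : ‖g B1 - g B0 - fderiv ℝ g B0 v‖ ≤ 1 / 2 * mδγ * ‖v‖ ^ 2 := by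
    set c : ℝ → E := fun t => B0 + t • v with hc
    have hcs : ∀ t ∈ Set.Icc (0:ℝ) 1, c t ∈ s := by
      intro t ht
      rw [hs, segment_eq_image']
      exact ⟨t, ht, rfl⟩
    set f : ℝ → E := fun t => g (c t) - g B0 - t • (fderiv ℝ g B0 v) with hf
    set f' : ℝ → E := fun t => fderiv ℝ g (c t) v - fderiv ℝ g B0 v with hf'
    have hder : ∀ t ∈ Set.Icc (0:ℝ) 1, HasDerivAt f (f' t) t := by
      intro t ht
      have hgd : DifferentiableAt ℝ g (c t) :=
        (hg.differentiableOn (by norm_num)).differentiableAt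
          (hU.mem_nhds (hseg (hcs t ht)))
      have hcd : HasDerivAt c v t := by
        simpa only [id, one_smul] using ((hasDerivAt_id t).smul_const v).const_add B0
      have h1 : HasDerivAt (fun t => g (c t)) (fderiv ℝ g (c t) v) t :=
        hgd.hasFDerivAt.comp_hasDerivAt t hcd
      have h2 : HasDerivAt (fun t : ℝ => t • (fderiv ℝ g B0 v)) (fderiv ℝ g B0 v) t := by
        simpa using (hasDerivAt_id t).smul_const (fderiv ℝ g B0 v)
      exact (h1.sub_const (g B0)).sub h2
    have hcont : ContinuousOn f (Set.Icc (0:ℝ) 1) := fun t ht =>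
      (hder t ht).continuousAt.continuousWithinAt
    have hB : ∀ t : ℝ, HasDerivAt (fun t : ℝ => 1 / 2 * mδγ * ‖v‖ ^ 2 * t ^ 2)
        (mδγ * ‖v‖ ^ 2 * t) t := by
      intro t
      have := (hasDerivAt_pow 2 t).const_mul (1 / 2 * mδγ * ‖v‖ ^ 2)
      refine this.congr_deriv ?_
      ring
    have hbd : ∀ t ∈ Set.Ico (0:ℝ) 1, ‖f' t‖ ≤ mδγ * ‖v‖ ^ 2 * t := by
      intro t ht
      have hts : c t ∈ s := hcs t ⟨ht.1, le_of_lt ht.2⟩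
      have h1 : ‖f' t‖ ≤ ‖fderiv ℝ g (c t) - fderiv ℝ g B0‖ * ‖v‖ := by
        rw [hf']
        simpa using (fderiv ℝ g (c t) - fderiv ℝ g B0).le_opNorm v
      have h2 : ‖c t - B0‖ = t * ‖v‖ := by
        rw [hc]
        simp [norm_smul, abs_of_nonneg ht.1]
      calc ‖f' t‖ ≤ ‖fderiv ℝ g (c t) - fderiv ℝ g B0‖ * ‖v‖ := h1
        _ ≤ mδγ * ‖c t - B0‖ * ‖v‖ :=
          mul_le_mul_of_nonneg_right (hLip _ hts) (norm_nonneg _)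
        _ = mδγ * ‖v‖ ^ 2 * t := by rw [h2]; ring
    have := image_norm_le_of_norm_deriv_right_le_deriv_boundary hcont
      (fun t ht => (hder t ⟨ht.1, le_of_lt ht.2⟩).hasDerivWithinAt)
      (by simp [hf, hc]) hB hbd (Set.right_mem_Icc.2 zero_le_one)
    simpa [hf, hc, hv] using this
  -- the geometric sum inverse
  set S : E →L[ℝ] E := ∑ n ∈ Finset.range (N + 1), R ^ n with hSdef
  have hSinv : ∀ z : E, S ((1 - R) z) = z := by
    intro z
    have h1 : S * (1 - R) = 1 := by
      have h2 := geom_sum_mul R (N + 1)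
      rw [hnil] at h2
      calc S * (1 - R) = -(S * (R - 1)) := by noncomm_ring
        _ = -(0 - 1) := by rw [hSdef, h2]
        _ = 1 := by simp
    calc S ((1 - R) z) = (S * (1 - R)) z := rfl
      _ = z := by rw [h1]; rfl
  have hpow : ∀ n : ℕ, ‖R ^ n‖ ≤ mγz ^ n := by
    intro n
    induction n with
    | zero => simpa [ContinuousLinearMap.one_def] using ContinuousLinearMap.norm_id_le (E := E)
    | succ k ih =>
        calc ‖R ^ (k + 1)‖ = ‖R ^ k * R‖ := by rw [pow_succ]
          _ ≤ ‖R ^ k‖ * ‖R‖ := norm_mul_le _ _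
          _ ≤ mγz ^ k * mγz := mul_le_mul ih hR (norm_nonneg _) (pow_nonneg hmγz k)
          _ = mγz ^ (k + 1) := (pow_succ mγz k).symm
  have hSnorm : ‖S‖ ≤ ∑ n ∈ Finset.range (N + 1), mγz ^ n :=
    le_trans (norm_sum_le _ _) (Finset.sum_le_sum fun n _ => hpow n)
  -- key identity
  have hkey : (1 - R) (B1 - Bbar) = -(g B1 - g B0 - fderiv ℝ g B0 v) := by
    have h1 : (1 - R) (B1 - Bbar) = fderiv ℝ g B0 (B1 - B0) + fderiv ℝ g B0 (B0 - Bbar) := by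
      rw [← hDg, ← map_add]
      congr 1
      abel
    rw [h1, hNewton, hroot, hv]
    abel
  have hmain : ‖B1 - Bbar‖ ≤
      (∑ n ∈ Finset.range (N + 1), mγz ^ n) * (1 / 2 * mδγ * ‖v‖ ^ 2) := by
    have h1 : B1 - Bbar = S ((1 - R) (B1 - Bbar)) := (hSinv _).symm
    calc ‖B1 - Bbar‖ = ‖S ((1 - R) (B1 - Bbar))‖ := by rw [← h1]
      _ ≤ ‖S‖ * ‖(1 - R) (B1 - Bbar)‖ := S.le_opNorm _
      _ ≤ (∑ n ∈ Finset.range (N + 1), mγz ^ n) * (1 / 2 * mδγ * ‖v‖ ^ 2) := by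
          apply mul_le_mul hSnorm _ (norm_nonneg _)
            (le_trans (norm_nonneg S) hSnorm)
          rw [hkey, norm_neg]
          exact hTaylor
  constructor
  · have hvsq : ‖v‖ ^ 2 ≤ (η * (mLθ * mγθ)) ^ 2 :=
      pow_le_pow_left₀ (norm_nonneg _) hdist 2
    have hsum : (0:ℝ) ≤ ∑ n ∈ Finset.range (N + 1), mγz ^ n :=
      Finset.sum_nonneg fun n _ => pow_nonneg hmγz n
    calc ‖B1 - Bbar‖ ≤ (∑ n ∈ Finset.range (N + 1), mγz ^ n) * (1 / 2 * mδγ * ‖v‖ ^ 2) :=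
        hmain
      _ ≤ (∑ n ∈ Finset.range (N + 1), mγz ^ n) * (1 / 2 * mδγ * (η * (mLθ * mγθ)) ^ 2) := by
          apply mul_le_mul_of_nonneg_left _ hsum
          apply mul_le_mul_of_nonneg_left hvsq
          positivity
      _ = (1 / 2) * η ^ 2 * (mLθ * mγθ) ^ 2 * mδγ * ∑ n ∈ Finset.range (N + 1), mγz ^ n := by
          ring
  · intro h
    rw [geom_sum_eq h]
    rw [div_eq_div_iff (sub_ne_zero.mpr h) (sub_ne_zero.mpr (Ne.symm h))]
    ring
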